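/- Two index tuples for an S_N-invariant tensor are related by a permutation of particle labels if and only if their associated labeled multigraphs are isomorphic, provided N is at least the number of vertices of either graph. -/

import Mathlib

/-- An index: a single particle label (loop) or an unordered pair of distinct labels. -/
abbrev Idx (N : ℕ) := Fin N ⊕ {p : Sym2 (Fin N) // ¬ p.IsDiag}

/-- The edge associated to an index. -/
def edgeOf {N : ℕ} : Idx N → Sym2 (Fin N)
  | Sum.inl i => s(i, i)
  | Sum.inr p => p.1

/-- Labels (vertices) occurring in an index tuple. -/
def labels {N R : ℕ} (t : Fin R → Idx N) : Set (Fin N) :=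
  {v | ∃ k, v ∈ edgeOf (t k)}

/-- Isomorphism of the labeled multigraphs of two index tuples: a map of vertex sets,
injective on the vertices of the first, carrying the edge of each slot to the edge of
the corresponding slot of the second. -/
def GraphIso {N R : ℕ} (t t' : Fin R → Idx N) : Prop :=
  ∃ f : Fin N → Fin N, Set.InjOn f (labels t) ∧
    ∀ k, Sym2.map f (edgeOf (t k)) = edgeOf (t' k)

/-- The action of a permutation of particle labels on an index. -/
def permIdx {N : ℕ} (σ : Equiv.Perm (Fin N)) : Idx N → Idx N
  | Sum.inl i => Sum.inl (σ i)
  | Sum.inr p => Sum.inr ⟨Sym2.map σ p.1, fun h => p.2 ((Sym2.isDiag_map σ.injective).mp h)⟩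

/-- The natural action of `S_N` on index tuples. -/
def permAction {N R : ℕ} (σ : Equiv.Perm (Fin N)) (t : Fin R → Idx N) : Fin R → Idx N :=
  fun k => permIdx σ (t k)

/-- Every element of `Sym2` has a representative pair. -/
lemma sym2_rep {α : Type*} (z : Sym2 α) : ∃ a b, z = s(a, b) := by
  induction z using Sym2.ind with | _ a b => exact ⟨a, b, rfl⟩

/-- Two index tuples are related by a permutation of the particle labels if and only if
their associated labeled multigraphs are isomorphic, provided `N` is at least the
number of vertices of either graph. -/
theorem perm_related_iff_graphIso (N R : ℕ) (t t' : Fin R → Idx N)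
    (hN : (labels t).ncard ≤ N ∧ (labels t').ncard ≤ N) :
    (∃ σ : Equiv.Perm (Fin N), permAction σ t = t') ↔ GraphIso t t' := by
  constructor
  · rintro ⟨σ, rfl⟩
    refine ⟨σ, (σ.injective.injOn), fun k => ?_⟩
    cases h : t k with
    | inl i => simp [permAction, permIdx, edgeOf, h]
    | inr p => simp [permAction, permIdx, edgeOf, h]
  · rintro ⟨f, hinj, hf⟩
    classical
    let e : ↥(labels t) ≃ ↥(f '' labels t) := Equiv.Set.imageOfInjOn f _ hinj
    refine ⟨e.extendSubtype, ?_⟩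
    have hσ : ∀ x ∈ labels t, e.extendSubtype x = f x := fun x hx => by
      rw [Equiv.extendSubtype_apply_of_mem e x hx]; rfl
    funext k
    have hk := hf k
    cases h : t k with
    | inl i =>
      have hi : i ∈ labels t := ⟨k, by rw [h]; simp [edgeOf]⟩
      rw [h] at hk
      simp only [edgeOf, Sym2.map_pair_eq] at hk
      cases h' : t' k with
      | inl j =>
        rw [h'] at hk
        simp only [edgeOf] at hk
        have : f i = j := by
          have := Sym2.eq_iff.mp hk
          tauto
        simp [permAction, permIdx, h, h', hσ i hi, this]
      | inr q =>
        exfalso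
        rw [h'] at hk
        simp only [edgeOf] at hk
        exact q.2 (by rw [← hk]; simp)
    | inr p =>
      obtain ⟨a, b, hab⟩ := sym2_rep p.1
      have ha : a ∈ labels t := ⟨k, by rw [h]; simp only [edgeOf, hab]; exact Sym2.mem_mk_left a b⟩
      have hb : b ∈ labels t := ⟨k, by rw [h]; simp only [edgeOf, hab]; exact Sym2.mem_mk_right a b⟩
      rw [h] at hk
      simp only [edgeOf, hab, Sym2.map_pair_eq] at hk
      cases h' : t' k with
      | inl j =>
        exfalso
        rw [h'] at hk
        simp only [edgeOf] at hk
        apply p.2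
        rw [hab]
        have := Sym2.eq_iff.mp hk
        have hfab : f a = f b := by
          rcases this with ⟨h1, h2⟩ | ⟨h1, h2⟩ <;> rw [h1, h2]
        simp [Sym2.isDiag_iff_proj_eq, hinj ha hb hfab]
      | inr q =>
        rw [h'] at hk
        simp only [edgeOf] at hk
        simp only [permAction, permIdx, h]
        congr 1
        refine Subtype.ext ?_
        show Sym2.map e.extendSubtype p.1 = q.1
        rw [hab, Sym2.map_pair_eq, hσ a ha, hσ b hb, ← hk]
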